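/- (Local to global optimality, Lemma 3.3, with the explicit constant from its proof.) Let α > 0 and suppose S ∈ ℐ is a (2, α)-local maximum with det(A_S) ≠ 0. Then for every L ∈ ℐ, |det(A_L)| ≤ ((2k² + 8k)/α)^{2k} · |det(A_S)|; in particular ((2k² + 8k)/α)^{2k} · |det(A_S)| ≥ maxdet_k(A). -/

import Mathlib

open Finset

/-- The determinant of the square submatrix of `A` with rows `R` (in increasing order)
and columns `C` (in increasing order); junk value `0` if `R.card ≠ C.card`. -/
noncomputable def subdet {m n : ℕ} (A : Matrix (Fin m) (Fin n) ℝ)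
    (R : Finset (Fin m)) (C : Finset (Fin n)) : ℝ :=
  if h : R.card = C.card then
    (A.submatrix (R.orderEmbOfFin rfl) (C.orderEmbOfFin h.symm)).det
  else 0

/-- `maxdet k A` is the maximum of `|det A_S|` over all pairs of a `k`-subset of rows
and a `k`-subset of columns. -/
noncomputable def maxdet (k : ℕ) {m n : ℕ} (A : Matrix (Fin m) (Fin n) ℝ) : ℝ :=
  sSup {x : ℝ | ∃ (R : Finset (Fin m)) (C : Finset (Fin n)),
    R.card = k ∧ C.card = k ∧ x = |subdet A R C|}

lemma abs_det_submatrix_eq_subdet {m n t : ℕ} (A : Matrix (Fin m) (Fin n) ℝ)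
    (R : Finset (Fin m)) (C : Finset (Fin n)) (hR : R.card = t) (hC : C.card = t)
    (f : Fin t → Fin m) (g : Fin t → Fin n) (hf : Function.Injective f)
    (hg : Function.Injective g)
    (hfR : ∀ i, f i ∈ R) (hgC : ∀ i, g i ∈ C) :
    |(A.submatrix f g).det| = |subdet A R C| := by
  subst hR
  have hRC : R.card = C.card := hC.symm
  rw [subdet, dif_pos hRC]
  set e1 : Fin R.card → Fin m := ⇑(R.orderEmbOfFin rfl) with he1
  set e2 : Fin R.card → Fin n := ⇑(C.orderEmbOfFin hRC.symm) with he2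
  have hre1 : Set.range e1 = Set.range f := by
    rw [he1]
    rw [Finset.range_orderEmbOfFin]
    have h1 : Set.range f ⊆ (R : Set (Fin m)) := by
      rintro x ⟨i, rfl⟩; exact hfR i
    have h2 : (Set.range f).ncard = R.card := by
      rw [← Set.image_univ, ← Finset.coe_univ, ← Finset.coe_image, Set.ncard_coe_finset,
        Finset.card_image_of_injective _ hf, Finset.card_univ, Fintype.card_fin]
    symm
    apply Set.eq_of_subset_of_ncard_le h1 _ R.finite_toSet
    · rw [h2, Set.ncard_coe_finset]
  have hre2 : Set.range e2 = Set.range g := by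
    rw [he2, Finset.range_orderEmbOfFin]
    have h1 : Set.range g ⊆ (C : Set (Fin n)) := by
      rintro x ⟨i, rfl⟩; exact hgC i
    have h2 : (Set.range g).ncard = C.card := by
      rw [← Set.image_univ, ← Finset.coe_univ, ← Finset.coe_image, Set.ncard_coe_finset,
        Finset.card_image_of_injective _ hg, Finset.card_univ, Fintype.card_fin, hRC]
    symm
    apply Set.eq_of_subset_of_ncard_le h1 _ C.finite_toSet
    · rw [h2, Set.ncard_coe_finset]
  have he1inj : Function.Injective e1 := (R.orderEmbOfFin rfl).injective
  have he2inj : Function.Injective e2 := (C.orderEmbOfFin hRC.symm).injective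
  set σ : Equiv.Perm (Fin R.card) :=
    (Equiv.ofInjective f hf).trans ((Equiv.setCongr hre1.symm).trans
      (Equiv.ofInjective e1 he1inj).symm) with hσ
  set τ : Equiv.Perm (Fin R.card) :=
    (Equiv.ofInjective g hg).trans ((Equiv.setCongr hre2.symm).trans
      (Equiv.ofInjective e2 he2inj).symm) with hτ
  have hfσ : ∀ i, e1 (σ i) = f i := by
    intro i
    simp only [hσ, Equiv.trans_apply, Equiv.setCongr_apply]
    exact Equiv.apply_ofInjective_symm he1inj _
  have hgτ : ∀ i, e2 (τ i) = g i := by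
    intro i
    simp only [hτ, Equiv.trans_apply, Equiv.setCongr_apply]
    exact Equiv.apply_ofInjective_symm he2inj _
  have hsub : A.submatrix f g = ((A.submatrix e1 e2).submatrix σ id).submatrix id τ := by
    rw [Matrix.submatrix_submatrix, Matrix.submatrix_submatrix]
    ext i j
    simp [hfσ, hgτ]
  rw [hsub, Matrix.det_permute', Matrix.det_permute]
  rcases Int.units_eq_one_or (Equiv.Perm.sign σ) with h | h <;>
    rcases Int.units_eq_one_or (Equiv.Perm.sign τ) with h' | h' <;>
      simp [h, h', abs_mul]

lemma det_updateRow_adj {t : ℕ} (X : Matrix (Fin t) (Fin t) ℝ) (i : Fin t) (v : Fin t → ℝ) :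
    (X.updateRow i v).det = ∑ s, v s * X.adjugate s i := by
  rw [← Matrix.cramer_transpose_apply, Matrix.cramer_eq_adjugate_mulVec,
    ← Matrix.adjugate_transpose]
  simp [Matrix.mulVec, dotProduct, Matrix.transpose_apply, mul_comm]

lemma det_updateCol_adj {t : ℕ} (X : Matrix (Fin t) (Fin t) ℝ) (j : Fin t) (v : Fin t → ℝ) :
    (X.updateCol j v).det = ∑ s, v s * X.adjugate j s := by
  rw [← Matrix.cramer_apply, Matrix.cramer_eq_adjugate_mulVec]
  simp [Matrix.mulVec, dotProduct, mul_comm]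

lemma adj_eq_det_mul_inv {t : ℕ} (X : Matrix (Fin t) (Fin t) ℝ) (h : X.det ≠ 0) (s i : Fin t) :
    X.adjugate s i = X.det * X⁻¹ s i := by
  rw [Matrix.inv_def]
  simp [Ring.inverse_eq_inv']
  field_simp

lemma update_inj {t : ℕ} {γ : Type*} (f : Fin t → γ) (hf : Function.Injective f) (i : Fin t)
    (r : γ) (hr : ∀ s, r ≠ f s) : Function.Injective (Function.update f i r) := by
  intro a b hab
  by_cases ha : a = i <;> by_cases hb : b = i <;>
    simp [Function.update_apply, ha, hb] at hab ⊢
  · exact absurd hab (hr b)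
  · exact absurd hab.symm (hr a)
  · exact hf hab

lemma snoc_inj {t : ℕ} {γ : Type*} (f : Fin t → γ) (hf : Function.Injective f)
    (r : γ) (hr : ∀ s, r ≠ f s) : Function.Injective (Fin.snoc f r) := by
  intro a b hab
  rcases Fin.eq_castSucc_or_eq_last a with ⟨a', rfl⟩ | rfl <;>
    rcases Fin.eq_castSucc_or_eq_last b with ⟨b', rfl⟩ | rfl <;>
      simp [Fin.snoc_castSucc, Fin.snoc_last] at hab ⊢
  · exact hf hab
  · exact absurd hab.symm (hr a')
  · exact absurd hab (hr b')

lemma symmDiff_swap {γ : Type*} [DecidableEq γ] (S : Finset γ) (i r : γ)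
    (hi : i ∈ S) (hr : r ∉ S) : symmDiff S (insert r (S.erase i)) = {i, r} := by
  ext x
  simp only [symmDiff_def, Finset.sup_eq_union, Finset.mem_union, Finset.mem_sdiff,
    Finset.mem_insert, Finset.mem_erase, Finset.mem_singleton]
  constructor
  · rintro (⟨hxS, hx⟩ | ⟨hx, hxS⟩)
    · left; by_contra hxi; exact hx (Or.inr ⟨hxi, hxS⟩)
    · rcases hx with rfl | ⟨hne, hmem⟩
      · right; rfl
      · exact absurd hmem hxS
  · rintro (rfl | rfl)
    · exact Or.inl ⟨hi, by rintro (rfl | ⟨hne, _⟩); exacts [hr hi, hne rfl]⟩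
    · exact Or.inr ⟨Or.inl rfl, hr⟩

lemma card_swap {γ : Type*} [DecidableEq γ] (S : Finset γ) (i r : γ)
    (hi : i ∈ S) (hr : r ∉ S) : (insert r (S.erase i)).card = S.card := by
  rw [Finset.card_insert_of_notMem (fun h => hr (Finset.mem_of_mem_erase h)),
    Finset.card_erase_of_mem hi]
  have : 1 ≤ S.card := Finset.card_pos.mpr ⟨i, hi⟩
  omega

lemma perm_card_left {k : ℕ} (σ : Equiv.Perm (Fin k ⊕ Fin k)) :
    (univ.filter fun b : Fin k => (σ (Sum.inl b)).isLeft).card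
      = (univ.filter fun b : Fin k => (σ (Sum.inr b)).isRight).card := by
  have h3 : (univ.filter fun x : Fin k ⊕ Fin k => (σ x).isLeft).card
      = (univ.filter fun x : Fin k ⊕ Fin k => x.isLeft).card := by
    apply Finset.card_bij' (fun x _ => σ x) (fun y _ => σ.symm y) <;> intros <;>
      simp_all
  have h4 : (univ.filter fun x : Fin k ⊕ Fin k => x.isLeft).card = k := by
    rw [Finset.card_filter, Fintype.sum_sum_type]
    simp
  have h5 : (univ.filter fun x : Fin k ⊕ Fin k => (σ x).isLeft).card
      = (univ.filter fun b : Fin k => (σ (Sum.inl b)).isLeft).card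
        + (univ.filter fun b : Fin k => (σ (Sum.inr b)).isLeft).card := by
    rw [Finset.card_filter, Fintype.sum_sum_type, Finset.card_filter, Finset.card_filter]
  have h6 : (univ.filter fun b : Fin k => (σ (Sum.inr b)).isLeft).card
      + (univ.filter fun b : Fin k => (σ (Sum.inr b)).isRight).card = k := by
    have := Finset.card_filter_add_card_filter_not
      (s := (univ : Finset (Fin k))) (p := fun b => (σ (Sum.inr b)).isLeft = true)
    simp only [Sum.not_isLeft] at this
    simpa using this
  have h7 : (univ.filter fun b : Fin k => (σ (Sum.inl b)).isLeft).card ≤ k := by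
    refine le_trans (Finset.card_filter_le _ _) (by simp)
  omega

lemma perm_prod_bound {k : ℕ} (H : Matrix (Fin k ⊕ Fin k) (Fin k ⊕ Fin k) ℝ)
    (βb εb cb : ℝ) (hβ0 : 0 ≤ βb) (hε0 : 0 ≤ εb) (hc1 : 1 ≤ cb)
    (h11 : ∀ a b, |H (Sum.inl a) (Sum.inl b)| ≤ βb)
    (h12 : ∀ a b, |H (Sum.inl a) (Sum.inr b)| ≤ cb)
    (h21 : ∀ a b, |H (Sum.inr a) (Sum.inl b)| ≤ cb)
    (h22 : ∀ a b, |H (Sum.inr a) (Sum.inr b)| ≤ εb)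
    (hpair : βb * εb ≤ 2 * cb ^ 2)
    (σ : Equiv.Perm (Fin k ⊕ Fin k)) :
    ∏ x, |H (σ x) x| ≤ 2 ^ k * cb ^ (2 * k) := by
  have hc0 : (0 : ℝ) ≤ cb := le_trans zero_le_one hc1
  set P := univ.filter fun b : Fin k => (σ (Sum.inl b)).isLeft with hP
  set Q := univ.filter fun b : Fin k => (σ (Sum.inr b)).isRight with hQ
  have hPQ : P.card = Q.card := perm_card_left σ
  have hPk : P.card ≤ k := le_trans (Finset.card_filter_le _ _) (by simp)
  have hcardPc : (univ.filter fun b : Fin k => ¬ ((σ (Sum.inl b)).isLeft = true)).card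
      = k - P.card := by
    have h := Finset.card_filter_add_card_filter_not
      (s := (univ : Finset (Fin k))) (p := fun b => (σ (Sum.inl b)).isLeft = true)
    have e : univ.filter (fun b : Fin k => (σ (Sum.inl b)).isLeft = true) = P := rfl
    rw [e] at h
    simp only [Finset.card_univ, Fintype.card_fin] at h
    omega
  have hcardQc : (univ.filter fun b : Fin k => ¬ ((σ (Sum.inr b)).isRight = true)).card
      = k - Q.card := by
    have h := Finset.card_filter_add_card_filter_not
      (s := (univ : Finset (Fin k))) (p := fun b => (σ (Sum.inr b)).isRight = true)
    have e : univ.filter (fun b : Fin k => (σ (Sum.inr b)).isRight = true) = Q := rfl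
    rw [e] at h
    simp only [Finset.card_univ, Fintype.card_fin] at h
    omega
  rw [Fintype.prod_sum_type]
  have h1 : ∏ b : Fin k, |H (σ (Sum.inl b)) (Sum.inl b)| ≤ βb ^ P.card * cb ^ (k - P.card) := by
    rw [← Finset.prod_filter_mul_prod_filter_not univ
      (fun b => (σ (Sum.inl b)).isLeft = true)]
    have e1 : ∏ b ∈ P, |H (σ (Sum.inl b)) (Sum.inl b)| ≤ βb ^ P.card := by
      rw [← Finset.prod_const]
      refine Finset.prod_le_prod (fun _ _ => abs_nonneg _) (fun b hb => ?_)
      obtain ⟨a, ha⟩ := Sum.isLeft_iff.mp (by simpa using (Finset.mem_filter.mp hb).2)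
      rw [ha]; exact h11 a b
    have e2 : ∏ b ∈ univ.filter (fun b => ¬ ((σ (Sum.inl b)).isLeft = true)),
        |H (σ (Sum.inl b)) (Sum.inl b)| ≤ cb ^ (k - P.card) := by
      rw [← hcardPc, ← Finset.prod_const]
      refine Finset.prod_le_prod (fun _ _ => abs_nonneg _) (fun b hb => ?_)
      have hbr : (σ (Sum.inl b)).isRight := by
        have := (Finset.mem_filter.mp hb).2
        simpa [Sum.not_isLeft] using this
      obtain ⟨a, ha⟩ := Sum.isRight_iff.mp hbr
      rw [ha]; exact h21 a b
    exact mul_le_mul e1 e2 (Finset.prod_nonneg fun _ _ => abs_nonneg _)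
      (pow_nonneg hβ0 _)
  have h2 : ∏ b : Fin k, |H (σ (Sum.inr b)) (Sum.inr b)| ≤ εb ^ Q.card * cb ^ (k - Q.card) := by
    rw [← Finset.prod_filter_mul_prod_filter_not univ
      (fun b => (σ (Sum.inr b)).isRight = true)]
    have e1 : ∏ b ∈ Q, |H (σ (Sum.inr b)) (Sum.inr b)| ≤ εb ^ Q.card := by
      rw [← Finset.prod_const]
      refine Finset.prod_le_prod (fun _ _ => abs_nonneg _) (fun b hb => ?_)
      obtain ⟨a, ha⟩ := Sum.isRight_iff.mp (by simpa using (Finset.mem_filter.mp hb).2)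
      rw [ha]; exact h22 a b
    have e2 : ∏ b ∈ univ.filter (fun b => ¬ ((σ (Sum.inr b)).isRight = true)),
        |H (σ (Sum.inr b)) (Sum.inr b)| ≤ cb ^ (k - Q.card) := by
      rw [← hcardQc, ← Finset.prod_const]
      refine Finset.prod_le_prod (fun _ _ => abs_nonneg _) (fun b hb => ?_)
      have hbl : (σ (Sum.inr b)).isLeft := by
        have := (Finset.mem_filter.mp hb).2
        simpa [Sum.not_isRight] using this
      obtain ⟨a, ha⟩ := Sum.isLeft_iff.mp hbl
      rw [ha]; exact h12 a b
    exact mul_le_mul e1 e2 (Finset.prod_nonneg fun _ _ => abs_nonneg _)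
      (pow_nonneg hε0 _)
  calc (∏ b : Fin k, |H (σ (Sum.inl b)) (Sum.inl b)|)
      * ∏ b : Fin k, |H (σ (Sum.inr b)) (Sum.inr b)|
      ≤ (βb ^ P.card * cb ^ (k - P.card)) * (εb ^ Q.card * cb ^ (k - Q.card)) := by
        exact mul_le_mul h1 h2 (Finset.prod_nonneg fun _ _ => abs_nonneg _)
          (by positivity)
    _ = (βb * εb) ^ P.card * (cb ^ (k - P.card)) ^ 2 := by
        rw [← hPQ]; ring
    _ ≤ (2 * cb ^ 2) ^ P.card * (cb ^ (k - P.card)) ^ 2 := by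
        refine mul_le_mul_of_nonneg_right (pow_le_pow_left₀ (mul_nonneg hβ0 hε0) hpair _)
          (by positivity)
    _ = 2 ^ P.card * cb ^ (2 * P.card + 2 * (k - P.card)) := by
        rw [mul_pow, ← pow_mul, ← pow_mul, pow_add]
        ring
    _ ≤ 2 ^ k * cb ^ (2 * k) := by
        have : 2 * P.card + 2 * (k - P.card) = 2 * k := by omega
        rw [this]
        exact mul_le_mul_of_nonneg_right
          (pow_le_pow_right₀ one_le_two hPk) (by positivity)

set_option maxHeartbeats 2000000 in
/-- **Local to global optimality** (Lemma 3.3, with the explicit constant `2k² + 8k`):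
if `S` is a `(2, α)`-local maximum with `det A_S ≠ 0`, then every `k × k` submatrix `L`
satisfies `|det A_L| ≤ ((2k² + 8k)/α)^(2k) * |det A_S|`; in particular
`((2k² + 8k)/α)^(2k) * |det A_S| ≥ maxdet_k(A)`.
Here `d(S,T) ≤ 2` is expressed as `|S_R Δ T_R| + |S_C Δ T_C| ≤ 2 * 2`. -/
theorem local_to_global {k m n : ℕ} (hk : 1 ≤ k) (hm : k ≤ m) (hn : k ≤ n)
    (A : Matrix (Fin m) (Fin n) ℝ) (α : ℝ) (hα : 0 < α)
    (SR : Finset (Fin m)) (SC : Finset (Fin n))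
    (hSR : SR.card = k) (hSC : SC.card = k)
    (hS0 : subdet A SR SC ≠ 0)
    (hloc : ∀ (TR : Finset (Fin m)) (TC : Finset (Fin n)),
      TR.card = k → TC.card = k →
      (symmDiff SR TR).card + (symmDiff SC TC).card ≤ 2 * 2 →
      α * |subdet A TR TC| ≤ |subdet A SR SC|) :
    (∀ (LR : Finset (Fin m)) (LC : Finset (Fin n)), LR.card = k → LC.card = k →
      |subdet A LR LC| ≤ ((2 * (k : ℝ) ^ 2 + 8 * k) / α) ^ (2 * k) * |subdet A SR SC|)
    ∧ ((2 * (k : ℝ) ^ 2 + 8 * k) / α) ^ (2 * k) * |subdet A SR SC| ≥ maxdet k A := by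
  classical
  have hα1 : α ≤ 1 := by
    have h := hloc SR SC hSR hSC (by simp)
    have hd : 0 < |subdet A SR SC| := abs_pos.mpr hS0
    nlinarith
  have hai : (1:ℝ) ≤ α⁻¹ := by
    rw [one_le_inv_iff₀]; exact ⟨hα, hα1⟩
  have hai0 : (0:ℝ) < α⁻¹ := inv_pos.mpr hα
  set eR : Fin k → Fin m := ⇑(SR.orderEmbOfFin hSR) with heR
  set eC : Fin k → Fin n := ⇑(SC.orderEmbOfFin hSC) with heC
  have heRinj : Function.Injective eR := (SR.orderEmbOfFin hSR).injective
  have heCinj : Function.Injective eC := (SC.orderEmbOfFin hSC).injective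
  have heRmem : ∀ i, eR i ∈ SR := fun i => Finset.orderEmbOfFin_mem SR hSR i
  have heCmem : ∀ i, eC i ∈ SC := fun i => Finset.orderEmbOfFin_mem SC hSC i
  have heRsurj : ∀ r ∈ SR, ∃ i, eR i = r := by
    intro r hr
    have h := Finset.range_orderEmbOfFin SR hSR
    have : r ∈ Set.range ⇑(SR.orderEmbOfFin hSR) := by rw [h]; exact hr
    exact this
  have heCsurj : ∀ c ∈ SC, ∃ j, eC j = c := by
    intro c hc
    have h := Finset.range_orderEmbOfFin SC hSC
    have : c ∈ Set.range ⇑(SC.orderEmbOfFin hSC) := by rw [h]; exact hc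
    exact this
  set B : Matrix (Fin k) (Fin k) ℝ := A.submatrix eR eC with hBdef
  have habsB : |B.det| = |subdet A SR SC| :=
    abs_det_submatrix_eq_subdet A SR SC hSR hSC eR eC heRinj heCinj heRmem heCmem
  have hB0 : B.det ≠ 0 := by
    intro h
    rw [h, abs_zero] at habsB
    exact hS0 (abs_eq_zero.mp habsB.symm)
  have hBu : IsUnit B.det := isUnit_iff_ne_zero.mpr hB0
  have hdB : 0 < |B.det| := abs_pos.mpr hB0
  have hBBi : B * B⁻¹ = 1 := Matrix.mul_nonsing_inv B hBu
  have hBiB : B⁻¹ * B = 1 := Matrix.nonsing_inv_mul B hBu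
  set M : Fin m → Fin k → ℝ := fun r i => ∑ j, A r (eC j) * B⁻¹ j i with hMdef
  set N : Fin k → Fin n → ℝ := fun j c => ∑ i, B⁻¹ j i * A (eR i) c with hNdef
  set E : Fin m → Fin n → ℝ := fun r c => A r c - ∑ i, M r i * A (eR i) c with hEdef
  have hrowId : ∀ (r : Fin m) (i : Fin k),
      (B.updateRow i fun j => A r (eC j)).det = B.det * M r i := by
    intro r i
    rw [det_updateRow_adj, hMdef, Finset.mul_sum]
    refine Finset.sum_congr rfl fun s _ => ?_
    rw [adj_eq_det_mul_inv B hB0]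
    ring
  have hrowAll : ∀ (r : Fin m) (i : Fin k),
      |(B.updateRow i fun j => A r (eC j)).det| ≤ α⁻¹ * |B.det| := by
    intro r i
    by_cases hr : r ∈ SR
    · obtain ⟨i₀, rfl⟩ := heRsurj r hr
      by_cases hii : i₀ = i
      · subst hii
        have hrow : (fun j => A (eR i₀) (eC j)) = B i₀ := by
          funext j; simp [hBdef, Matrix.submatrix_apply]
        rw [hrow, Matrix.updateRow_eq_self]
        exact le_mul_of_one_le_left (abs_nonneg _) hai
      · have hzero : (B.updateRow i fun j => A (eR i₀) (eC j)).det = 0 := by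
          apply Matrix.det_zero_of_row_eq (show i ≠ i₀ from fun h => hii h.symm)
          funext j
          rw [Matrix.updateRow_self, Matrix.updateRow_ne (fun h => hii h)]
          simp [hBdef]
        rw [hzero, abs_zero]
        positivity
    · have hup : B.updateRow i (fun j => A r (eC j))
          = A.submatrix (Function.update eR i r) eC := by
        ext a b
        by_cases ha : a = i <;>
          simp [Matrix.updateRow_apply, Function.update_apply, ha, hBdef]
      rw [hup]
      have hrne : ∀ s, r ≠ eR s := fun s hs => hr (hs ▸ heRmem s)
      have hcard : (insert r (SR.erase (eR i))).card = k := by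
        rw [card_swap SR (eR i) r (heRmem i) hr, hSR]
      have hmem : ∀ t, Function.update eR i r t ∈ insert r (SR.erase (eR i)) := by
        intro t
        by_cases ht : t = i
        · simp [Function.update_apply, ht]
        · rw [Function.update_apply, if_neg ht]
          exact Finset.mem_insert_of_mem
            (Finset.mem_erase.mpr ⟨fun h => ht (heRinj h), heRmem t⟩)
      have habs2 := abs_det_submatrix_eq_subdet A (insert r (SR.erase (eR i))) SC hcard hSC
        (Function.update eR i r) eC (update_inj eR heRinj i r hrne) heCinj hmem heCmem
      rw [habs2]
      have hsd : (symmDiff SR (insert r (SR.erase (eR i)))).card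
          + (symmDiff SC SC).card ≤ 2 * 2 := by
        rw [symmDiff_swap SR (eR i) r (heRmem i) hr, symmDiff_self]
        have : ({eR i, r} : Finset (Fin m)).card ≤ 2 := Finset.card_insert_le _ _ |>.trans (by simp)
        simpa using by omega
      have hl := hloc (insert r (SR.erase (eR i))) SC hcard hSC hsd
      rw [← habsB] at hl
      calc |subdet A (insert r (SR.erase (eR i))) SC|
          = α⁻¹ * (α * |subdet A (insert r (SR.erase (eR i))) SC|) := by
            field_simp
        _ ≤ α⁻¹ * |B.det| := by
            exact mul_le_mul_of_nonneg_left hl (le_of_lt hai0)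
  have hMb : ∀ r i, |M r i| ≤ α⁻¹ := by
    intro r i
    have h := hrowAll r i
    rw [hrowId r i, abs_mul] at h
    exact le_of_mul_le_mul_left (by rwa [mul_comm α⁻¹ |B.det|] at h) hdB
  have hcolId : ∀ (c : Fin n) (j : Fin k),
      (B.updateCol j fun i => A (eR i) c).det = B.det * N j c := by
    intro c j
    rw [det_updateCol_adj, hNdef, Finset.mul_sum]
    refine Finset.sum_congr rfl fun s _ => ?_
    rw [adj_eq_det_mul_inv B hB0]
    ring
  have hcolAll : ∀ (c : Fin n) (j : Fin k),
      |(B.updateCol j fun i => A (eR i) c).det| ≤ α⁻¹ * |B.det| := by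
    intro c j
    by_cases hc : c ∈ SC
    · obtain ⟨j₀, rfl⟩ := heCsurj c hc
      by_cases hjj : j₀ = j
      · subst hjj
        have hcol : (fun i => A (eR i) (eC j₀)) = fun i => B i j₀ := by
          funext i; simp [hBdef, Matrix.submatrix_apply]
        rw [hcol, Matrix.updateCol_eq_self]
        exact le_mul_of_one_le_left (abs_nonneg _) hai
      · have hzero : (B.updateCol j fun i => A (eR i) (eC j₀)).det = 0 := by
          apply Matrix.det_zero_of_column_eq (show j ≠ j₀ from fun h => hjj h.symm)
          intro i
          rw [Matrix.updateCol_self, Matrix.updateCol_ne (fun h => hjj h)]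
          simp [hBdef]
        rw [hzero, abs_zero]
        positivity
    · have hup : B.updateCol j (fun i => A (eR i) c)
          = A.submatrix eR (Function.update eC j c) := by
        ext a b
        by_cases hb : b = j <;>
          simp [Matrix.updateCol_apply, Function.update_apply, hb, hBdef]
      rw [hup]
      have hcne : ∀ s, c ≠ eC s := fun s hs => hc (hs ▸ heCmem s)
      have hcard : (insert c (SC.erase (eC j))).card = k := by
        rw [card_swap SC (eC j) c (heCmem j) hc, hSC]
      have hmem : ∀ t, Function.update eC j c t ∈ insert c (SC.erase (eC j)) := by
        intro t
        by_cases ht : t = j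
        · simp [Function.update_apply, ht]
        · rw [Function.update_apply, if_neg ht]
          exact Finset.mem_insert_of_mem
            (Finset.mem_erase.mpr ⟨fun h => ht (heCinj h), heCmem t⟩)
      have habs2 := abs_det_submatrix_eq_subdet A SR (insert c (SC.erase (eC j))) hSR hcard
        eR (Function.update eC j c) heRinj (update_inj eC heCinj j c hcne) heRmem hmem
      rw [habs2]
      have hsd : (symmDiff SR SR).card
          + (symmDiff SC (insert c (SC.erase (eC j)))).card ≤ 2 * 2 := by
        rw [symmDiff_swap SC (eC j) c (heCmem j) hc, symmDiff_self]
        have : ({eC j, c} : Finset (Fin n)).card ≤ 2 := Finset.card_insert_le _ _ |>.trans (by simp)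
        simpa using by omega
      have hl := hloc SR (insert c (SC.erase (eC j))) hSR hcard hsd
      rw [← habsB] at hl
      calc |subdet A SR (insert c (SC.erase (eC j)))|
          = α⁻¹ * (α * |subdet A SR (insert c (SC.erase (eC j)))|) := by
            field_simp
        _ ≤ α⁻¹ * |B.det| := by
            exact mul_le_mul_of_nonneg_left hl (le_of_lt hai0)
  have hNb : ∀ j c, |N j c| ≤ α⁻¹ := by
    intro j c
    have h := hcolAll c j
    rw [hcolId c j, abs_mul] at h
    exact le_of_mul_le_mul_left (by rwa [mul_comm α⁻¹ |B.det|] at h) hdB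
  have hEzero_row : ∀ (r : Fin m) (c : Fin n), r ∈ SR → E r c = 0 := by
    intro r c hr
    obtain ⟨i₀, rfl⟩ := heRsurj r hr
    have hMval : ∀ i, M (eR i₀) i = (1 : Matrix (Fin k) (Fin k) ℝ) i₀ i := by
      intro i
      rw [← hBBi, Matrix.mul_apply, hMdef]
      simp [hBdef]
    rw [hEdef]
    simp only [hMval, Matrix.one_apply, ite_mul, one_mul, zero_mul]
    rw [Finset.sum_ite_eq]
    simp
  have hEzero_col : ∀ (r : Fin m) (c : Fin n), c ∈ SC → E r c = 0 := by
    intro r c hc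
    obtain ⟨j₀, rfl⟩ := heCsurj c hc
    have h1 : ∑ i, M r i * A (eR i) (eC j₀) = A r (eC j₀) := by
      rw [hMdef]
      have e1 : ∀ i : Fin k, (∑ j, A r (eC j) * B⁻¹ j i) * A (eR i) (eC j₀)
          = ∑ j, A r (eC j) * (B⁻¹ j i * B i j₀) := by
        intro i; rw [Finset.sum_mul]; refine Finset.sum_congr rfl fun j _ => ?_
        simp only [hBdef, Matrix.submatrix_apply]
        ring
      rw [Finset.sum_congr rfl fun i _ => e1 i, Finset.sum_comm]
      have e2 : ∀ j : Fin k, ∑ i, A r (eC j) * (B⁻¹ j i * B i j₀)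
          = A r (eC j) * (B⁻¹ * B) j j₀ := by
        intro j; rw [Matrix.mul_apply, Finset.mul_sum]
      rw [Finset.sum_congr rfl fun j _ => e2 j, hBiB]
      simp [Matrix.one_apply]
    rw [hEdef]
    simp only
    rw [h1, sub_self]
  have hEBb : ∀ (r : Fin m) (c : Fin n) (i j : Fin k), |E r c| * |B⁻¹ j i| ≤ 2 * α⁻¹ ^ 2 := by
    intro r c i j
    by_cases hr : r ∈ SR
    · rw [hEzero_row r c hr, abs_zero, zero_mul]; positivity
    by_cases hc : c ∈ SC
    · rw [hEzero_col r c hc, abs_zero, zero_mul]; positivity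
    by_cases hE0 : E r c = 0
    · rw [hE0, abs_zero, zero_mul]; positivity
    letI instB : Invertible B := B.invertibleOfIsUnitDet hBu
    have hBiinv : (⅟B : Matrix (Fin k) (Fin k) ℝ) = B⁻¹ := Matrix.invOf_eq_nonsing_inv B
    have hrne : ∀ s, r ≠ eR s := fun s hs => hr (hs ▸ heRmem s)
    have hcne : ∀ s, c ≠ eC s := fun s hs => hc (hs ▸ heCmem s)
    set f1 : Fin (k+1) → Fin m := Fin.snoc eR r with hf1
    set g1 : Fin (k+1) → Fin n := Fin.snoc eC c with hg1
    set K : Matrix (Fin (k+1)) (Fin (k+1)) ℝ := A.submatrix f1 g1 with hKdef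
    set bM : Matrix (Fin k) (Fin 1) ℝ := fun i' _ => A (eR i') c with hbM
    set aM : Matrix (Fin 1) (Fin k) ℝ := fun _ j' => A r (eC j') with haM
    set sM : Matrix (Fin 1) (Fin 1) ℝ := fun _ _ => A r c with hsM
    have hel : ∀ x : Fin k, (finSumFinEquiv (Sum.inl x) : Fin (k+1)) = Fin.castSucc x := by
      intro x; simp [finSumFinEquiv_apply_left]; rfl
    have her : ∀ x : Fin 1, (finSumFinEquiv (Sum.inr x) : Fin (k+1)) = Fin.last k := by
      intro x
      have hx : x = 0 := Subsingleton.elim x 0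
      subst hx
      simp [finSumFinEquiv_apply_right]
      ext; simp
    have hKb : K.submatrix finSumFinEquiv finSumFinEquiv = Matrix.fromBlocks B bM aM sM := by
      ext x y
      rcases x with x | x <;> rcases y with y | y <;>
        simp only [Matrix.fromBlocks_apply₁₁, Matrix.fromBlocks_apply₁₂, Matrix.fromBlocks_apply₂₁,
          Matrix.fromBlocks_apply₂₂] <;>
        simp [hKdef, hf1, hg1, hel, her, hBdef, hbM, haM, hsM]
    have hSchur : (sM - aM * ⅟B * bM) 0 0 = E r c := by
      rw [hBiinv]
      simp only [Matrix.sub_apply, Matrix.mul_apply]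
      simp only [hEdef, hMdef, haM, hbM, hsM]
    have hdetK : K.det = B.det * E r c := by
      rw [← Matrix.det_submatrix_equiv_self finSumFinEquiv, hKb, Matrix.det_fromBlocks₁₁,
        Matrix.det_fin_one, hSchur]
    have hKdet0 : K.det ≠ 0 := by rw [hdetK]; exact mul_ne_zero hB0 hE0
    have hKu : IsUnit K.det := isUnit_iff_ne_zero.mpr hKdet0
    letI instK : Invertible K := K.invertibleOfIsUnitDet hKu
    letI insteS : Invertible (sM - aM * ⅟B * bM) := Matrix.invertibleOfIsUnitDet _ (by
      rw [Matrix.det_fin_one, hSchur]; exact isUnit_iff_ne_zero.mpr hE0)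
    letI instFB : Invertible (Matrix.fromBlocks B bM aM sM) :=
      Matrix.fromBlocks₁₁Invertible B bM aM sM
    have hKinv : K⁻¹ (Fin.castSucc j) (Fin.castSucc i)
        = B⁻¹ j i + N j c * (E r c)⁻¹ * M r i := by
      have h1 : (K.submatrix (finSumFinEquiv : Fin k ⊕ Fin 1 ≃ Fin (k+1)) finSumFinEquiv)⁻¹
          = K⁻¹.submatrix finSumFinEquiv finSumFinEquiv := by
        apply Matrix.inv_eq_right_inv
        rw [Matrix.submatrix_mul_equiv, Matrix.mul_nonsing_inv K hKu, Matrix.submatrix_one_equiv]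
      have h2 : (Matrix.fromBlocks B bM aM sM)⁻¹ = Matrix.fromBlocks
          (⅟B + ⅟B * bM * ⅟(sM - aM * ⅟B * bM) * aM * ⅟B) (-(⅟B * bM * ⅟(sM - aM * ⅟B * bM)))
          (-(⅟(sM - aM * ⅟B * bM) * aM * ⅟B)) (⅟(sM - aM * ⅟B * bM)) := by
        rw [← Matrix.invOf_eq_nonsing_inv]
        exact Matrix.invOf_fromBlocks₁₁_eq B bM aM sM
      have h3 : K⁻¹.submatrix (finSumFinEquiv : Fin k ⊕ Fin 1 ≃ Fin (k+1)) finSumFinEquiv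
          (Sum.inl j) (Sum.inl i) = K⁻¹ (Fin.castSucc j) (Fin.castSucc i) := by
        simp [hel]
      rw [← h3, ← h1, hKb, h2]
      have hinv1 : (⅟(sM - aM * ⅟B * bM) : Matrix (Fin 1) (Fin 1) ℝ) 0 0 = (E r c)⁻¹ := by
        rw [Matrix.invOf_eq_nonsing_inv, Matrix.inv_def, Matrix.adjugate_fin_one,
          Matrix.det_fin_one, hSchur]
        simp [Ring.inverse_eq_inv']
      have hc1 : (⅟B * bM : Matrix (Fin k) (Fin 1) ℝ) = fun t _ => N t c := by
        rw [hBiinv]; ext t u; rw [Matrix.mul_apply]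
      have hc2 : (aM * ⅟B : Matrix (Fin 1) (Fin k) ℝ) = fun _ t => M r t := by
        rw [hBiinv]; ext u t; rw [Matrix.mul_apply]
      have hinvM : (⅟(sM - aM * ⅟B * bM) : Matrix (Fin 1) (Fin 1) ℝ)
          = fun _ _ => (E r c)⁻¹ := by
        ext u v
        have hu : u = 0 := Subsingleton.elim _ _
        have hv : v = 0 := Subsingleton.elim _ _
        rw [hu, hv]; exact hinv1
      have hfull : (⅟B + ⅟B * bM * ⅟(sM - aM * ⅟B * bM) * aM * ⅟B)
          = fun t t' => B⁻¹ t t' + N t c * (E r c)⁻¹ * M r t' := by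
        ext t t'
        rw [Matrix.mul_assoc (⅟B * bM * ⅟(sM - aM * ⅟B * bM)) aM (⅟B)]
        simp only [Matrix.add_apply, Matrix.mul_apply, Fin.sum_univ_one, hinv1]
        simp only [hBiinv, haM, hbM,
          hNdef, hMdef]
      rw [Matrix.fromBlocks_apply₁₁, hfull]
    set ic := Fin.castSucc i with hic
    set jc := Fin.castSucc j with hjc
    set X₂ := K.updateRow ic (Pi.single jc 1) with hX2
    have hX2det : X₂.det = K.det * K⁻¹ jc ic := by
      rw [hX2, det_updateRow_adj, Finset.sum_eq_single jc]
      · rw [adj_eq_det_mul_inv K hKdet0]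
        simp
      · intro b _ hb; simp [Pi.single_apply, hb]
      · intro h; exact absurd (Finset.mem_univ jc) h
    have hcardR : (insert r (SR.erase (eR i))).card = k := by
      rw [card_swap SR (eR i) r (heRmem i) hr, hSR]
    have hcardC : (insert c (SC.erase (eC j))).card = k := by
      rw [card_swap SC (eC j) c (heCmem j) hc, hSC]
    have hf1inj : Function.Injective f1 := snoc_inj eR heRinj r hrne
    have hg1inj : Function.Injective g1 := snoc_inj eC heCinj c hcne
    have hmemR : ∀ t, (f1 ∘ ic.succAbove) t ∈ insert r (SR.erase (eR i)) := by
      intro t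
      rcases Fin.eq_castSucc_or_eq_last (ic.succAbove t) with ⟨u, hu⟩ | hu <;>
        rw [Function.comp_apply, hu]
      · have hui : u ≠ i := by
          intro h
          exact Fin.succAbove_ne ic t (by rw [hu, h, hic])
        rw [hf1]
        simp only [Fin.snoc_castSucc]
        exact Finset.mem_insert_of_mem
          (Finset.mem_erase.mpr ⟨fun h => hui (heRinj h), heRmem u⟩)
      · rw [hf1]
        simp only [Fin.snoc_last]
        exact Finset.mem_insert_self _ _
    have hmemC : ∀ t, (g1 ∘ jc.succAbove) t ∈ insert c (SC.erase (eC j)) := by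
      intro t
      rcases Fin.eq_castSucc_or_eq_last (jc.succAbove t) with ⟨u, hu⟩ | hu <;>
        rw [Function.comp_apply, hu]
      · have hui : u ≠ j := by
          intro h
          exact Fin.succAbove_ne jc t (by rw [hu, h, hjc])
        rw [hg1]
        simp only [Fin.snoc_castSucc]
        exact Finset.mem_insert_of_mem
          (Finset.mem_erase.mpr ⟨fun h => hui (heCinj h), heCmem u⟩)
      · rw [hg1]
        simp only [Fin.snoc_last]
        exact Finset.mem_insert_self _ _
    have hX2det2 : |X₂.det|
        = |subdet A (insert r (SR.erase (eR i))) (insert c (SC.erase (eC j)))| := by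
      rw [Matrix.det_succ_row X₂ ic, Finset.sum_eq_single jc]
      · have h1 : X₂ ic jc = 1 := by rw [hX2, Matrix.updateRow_self]; simp
        have h2 : X₂.submatrix ic.succAbove jc.succAbove
            = A.submatrix (f1 ∘ ic.succAbove) (g1 ∘ jc.succAbove) := by
          rw [hX2, Matrix.submatrix_updateRow_succAbove, hKdef, Matrix.submatrix_submatrix]
        rw [h1, h2, mul_one, abs_mul, abs_pow, abs_neg, abs_one, one_pow, one_mul]
        exact abs_det_submatrix_eq_subdet A _ _ hcardR hcardC _ _
          (hf1inj.comp (Fin.succAbove_right_injective))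
          (hg1inj.comp (Fin.succAbove_right_injective)) hmemR hmemC
      · intro b _ hb
        have h0 : X₂ ic b = 0 := by
          rw [hX2, Matrix.updateRow_self]; simp [Pi.single_apply, hb]
        rw [h0]
        ring
      · intro h; exact absurd (Finset.mem_univ jc) h
    have hsd : (symmDiff SR (insert r (SR.erase (eR i)))).card
        + (symmDiff SC (insert c (SC.erase (eC j)))).card ≤ 2 * 2 := by
      rw [symmDiff_swap SR (eR i) r (heRmem i) hr, symmDiff_swap SC (eC j) c (heCmem j) hc]
      have h1 : ({eR i, r} : Finset (Fin m)).card ≤ 2 :=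
        (Finset.card_insert_le _ _).trans (by simp)
      have h2 : ({eC j, c} : Finset (Fin n)).card ≤ 2 :=
        (Finset.card_insert_le _ _).trans (by simp)
      omega
    have hl := hloc _ _ hcardR hcardC hsd
    rw [← habsB] at hl
    have hXB : |X₂.det| ≤ α⁻¹ * |B.det| := by
      rw [hX2det2]
      calc |subdet A (insert r (SR.erase (eR i))) (insert c (SC.erase (eC j)))|
          = α⁻¹ * (α * |subdet A (insert r (SR.erase (eR i))) (insert c (SC.erase (eC j)))|) := by
            field_simp
        _ ≤ α⁻¹ * |B.det| := mul_le_mul_of_nonneg_left hl (le_of_lt hai0)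
    have heq : X₂.det = B.det * (E r c * B⁻¹ j i + N j c * M r i) := by
      rw [hX2det, hdetK, hKinv]
      field_simp
    have hfinal : |E r c * B⁻¹ j i + N j c * M r i| ≤ α⁻¹ := by
      rw [heq, abs_mul] at hXB
      exact le_of_mul_le_mul_left (by rwa [mul_comm α⁻¹ |B.det|] at hXB) hdB
    calc |E r c| * |B⁻¹ j i| = |E r c * B⁻¹ j i| := (abs_mul _ _).symm
      _ = |(E r c * B⁻¹ j i + N j c * M r i) + (-(N j c * M r i))| := by
          congr 1; ring
      _ ≤ |E r c * B⁻¹ j i + N j c * M r i| + |(-(N j c * M r i))| := abs_add_le _ _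
      _ ≤ α⁻¹ + α⁻¹ * α⁻¹ := by
          refine add_le_add hfinal ?_
          rw [abs_neg, abs_mul]
          exact mul_le_mul (hNb j c) (hMb r i) (abs_nonneg _) (le_of_lt hai0)
      _ ≤ 2 * α⁻¹ ^ 2 := by nlinarith [hai, hai0]

  have main : ∀ (LR : Finset (Fin m)) (LC : Finset (Fin n)), LR.card = k → LC.card = k →
      |subdet A LR LC| ≤ ((2 * (k : ℝ) ^ 2 + 8 * k) / α) ^ (2 * k) * |subdet A SR SC| := by
    intro LR LC hLR hLC
    set fL : Fin k → Fin m := ⇑(LR.orderEmbOfFin hLR) with hfL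
    set gL : Fin k → Fin n := ⇑(LC.orderEmbOfFin hLC) with hgL
    have hfLinj : Function.Injective fL := (LR.orderEmbOfFin hLR).injective
    have hgLinj : Function.Injective gL := (LC.orderEmbOfFin hLC).injective
    have hfLmem : ∀ i, fL i ∈ LR := fun i => Finset.orderEmbOfFin_mem LR hLR i
    have hgLmem : ∀ i, gL i ∈ LC := fun i => Finset.orderEmbOfFin_mem LC hLC i
    set AL : Matrix (Fin k) (Fin k) ℝ := A.submatrix fL gL with hAL
    have habsL : |AL.det| = |subdet A LR LC| :=
      abs_det_submatrix_eq_subdet A LR LC hLR hLC fL gL hfLinj hgLinj hfLmem hgLmem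
    set ML : Matrix (Fin k) (Fin k) ℝ := (A.submatrix fL eC) * B⁻¹ with hML
    set NL : Matrix (Fin k) (Fin k) ℝ := B⁻¹ * (A.submatrix eR gL) with hNL
    set EL : Matrix (Fin k) (Fin k) ℝ := AL - ML * B * NL with hEL
    letI instB : Invertible B := B.invertibleOfIsUnitDet hBu
    letI instNB : Invertible (-B⁻¹ : Matrix (Fin k) (Fin k) ℝ) :=
      ⟨-B, by rw [Matrix.neg_mul, Matrix.mul_neg, neg_neg, hBBi],
        by rw [Matrix.neg_mul, Matrix.mul_neg, neg_neg, hBiB]⟩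
    have hinvNB : (⅟(-B⁻¹) : Matrix (Fin k) (Fin k) ℝ) = -B := rfl
    set H := Matrix.fromBlocks (-B⁻¹) NL ML EL with hH
    have hHdet : H.det = (-B⁻¹).det * AL.det := by
      rw [hH, Matrix.det_fromBlocks₁₁]
      congr 1
      rw [hinvNB, hEL, Matrix.mul_neg, Matrix.neg_mul, sub_neg_eq_add, sub_add_cancel]
    have hdetNB : |(-B⁻¹).det| = |B.det|⁻¹ := by
      rw [Matrix.det_neg, Matrix.det_nonsing_inv]
      simp [abs_mul, abs_pow, Ring.inverse_eq_inv', abs_inv]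
    have hALdet : |AL.det| = |H.det| * |B.det| := by
      rw [hHdet, abs_mul, hdetNB]
      field_simp
    have hMLb : ∀ a b, |ML a b| ≤ α⁻¹ := by
      intro a b
      have h : ML a b = M (fL a) b := by
        rw [hML, Matrix.mul_apply, hMdef]
        simp [Matrix.submatrix_apply]
      rw [h]; exact hMb _ _
    have hNLb : ∀ a b, |NL a b| ≤ α⁻¹ := by
      intro a b
      have h : NL a b = N a (gL b) := by
        rw [hNL, Matrix.mul_apply, hNdef]
        simp [Matrix.submatrix_apply]
      rw [h]; exact hNb _ _
    have hELE : ∀ a b, EL a b = E (fL a) (gL b) := by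
      intro a b
      have h1 : ML * B * NL = (A.submatrix fL eC) * (B⁻¹ * (A.submatrix eR gL)) := by
        rw [hML, Matrix.mul_assoc (A.submatrix fL eC) B⁻¹ B, hBiB, Matrix.mul_one, hNL]
      have h2 : (ML * B * NL) a b = ∑ i', M (fL a) i' * A (eR i') (gL b) := by
        rw [h1, Matrix.mul_apply]
        simp only [Matrix.submatrix_apply, Matrix.mul_apply, hMdef, Finset.mul_sum,
          Finset.sum_mul]
        rw [Finset.sum_comm]
        refine Finset.sum_congr rfl fun i' _ => ?_
        refine Finset.sum_congr rfl fun j' _ => ?_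
        ring
      rw [hEL, Matrix.sub_apply, h2, hEdef, hAL]
      simp [Matrix.submatrix_apply]
    have hne : (Finset.univ ×ˢ Finset.univ : Finset (Fin k × Fin k)).Nonempty := by
      refine ⟨(⟨0, hk⟩, ⟨0, hk⟩), by simp⟩
    set βx := (Finset.univ ×ˢ Finset.univ : Finset (Fin k × Fin k)).sup' hne (fun q : Fin k × Fin k => |B⁻¹ q.1 q.2|) with hβx
    set εx := (Finset.univ ×ˢ Finset.univ : Finset (Fin k × Fin k)).sup' hne (fun q : Fin k × Fin k => |EL q.1 q.2|) with hεx
    have hβle : ∀ a b, |B⁻¹ a b| ≤ βx := by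
      intro a b
      exact Finset.le_sup' (fun q : Fin k × Fin k => |B⁻¹ q.1 q.2|)
        (show (a, b) ∈ (Finset.univ ×ˢ Finset.univ : Finset (Fin k × Fin k)) by simp)
    have hεle : ∀ a b, |EL a b| ≤ εx := by
      intro a b
      exact Finset.le_sup' (fun q : Fin k × Fin k => |EL q.1 q.2|)
        (show (a, b) ∈ (Finset.univ ×ˢ Finset.univ : Finset (Fin k × Fin k)) by simp)
    have hβ0 : 0 ≤ βx := le_trans (abs_nonneg _) (hβle ⟨0, hk⟩ ⟨0, hk⟩)
    have hε0 : 0 ≤ εx := le_trans (abs_nonneg _) (hεle ⟨0, hk⟩ ⟨0, hk⟩)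
    have hpair : βx * εx ≤ 2 * α⁻¹ ^ 2 := by
      obtain ⟨q1, _, hq1⟩ := Finset.exists_mem_eq_sup' hne
        (fun q : Fin k × Fin k => |B⁻¹ q.1 q.2|)
      obtain ⟨q2, _, hq2⟩ := Finset.exists_mem_eq_sup' hne
        (fun q : Fin k × Fin k => |EL q.1 q.2|)
      rw [hβx, hεx, hq1, hq2, hELE, mul_comm]
      exact hEBb (fL q2.1) (gL q2.2) q1.2 q1.1
    have h11 : ∀ a b, |H (Sum.inl a) (Sum.inl b)| ≤ βx := by
      intro a b
      rw [hH, Matrix.fromBlocks_apply₁₁, Matrix.neg_apply, abs_neg]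
      exact hβle a b
    have h12 : ∀ a b, |H (Sum.inl a) (Sum.inr b)| ≤ α⁻¹ := by
      intro a b; rw [hH, Matrix.fromBlocks_apply₁₂]; exact hNLb a b
    have h21 : ∀ a b, |H (Sum.inr a) (Sum.inl b)| ≤ α⁻¹ := by
      intro a b; rw [hH, Matrix.fromBlocks_apply₂₁]; exact hMLb a b
    have h22 : ∀ a b, |H (Sum.inr a) (Sum.inr b)| ≤ εx := by
      intro a b; rw [hH, Matrix.fromBlocks_apply₂₂]; exact hεle a b
    have hdetH : |H.det| ≤ ((2 * k).factorial : ℝ) * (2 ^ k * α⁻¹ ^ (2 * k)) := by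
      rw [Matrix.det_apply]
      refine le_trans (Finset.abs_sum_le_sum_abs _ _) ?_
      have hterm : ∀ σ : Equiv.Perm (Fin k ⊕ Fin k),
          |Equiv.Perm.sign σ • ∏ x, H (σ x) x| ≤ 2 ^ k * α⁻¹ ^ (2 * k) := by
        intro σ
        have habs : |Equiv.Perm.sign σ • ∏ x, H (σ x) x| = |∏ x, H (σ x) x| := by
          rcases Int.units_eq_one_or (Equiv.Perm.sign σ) with h | h <;> simp [h]
        rw [habs, Finset.abs_prod]
        exact perm_prod_bound H βx εx α⁻¹ hβ0 hε0 hai h11 h12 h21 h22 hpair σ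
      refine le_trans (Finset.sum_le_card_nsmul _ _ _ (fun σ _ => hterm σ)) ?_
      rw [Finset.card_univ]
      have hcard : Fintype.card (Equiv.Perm (Fin k ⊕ Fin k)) = (2 * k).factorial := by
        rw [Fintype.card_perm, Fintype.card_sum, Fintype.card_fin, two_mul]
      rw [hcard, nsmul_eq_mul]
    have hnum : ((2 * k).factorial : ℝ) * 2 ^ k ≤ (2 * (k : ℝ) ^ 2 + 8 * k) ^ (2 * k) := by
      have hnat : (2 * k).factorial * 2 ^ k ≤ (2 * k ^ 2 + 8 * k) ^ (2 * k) := by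
        calc (2 * k).factorial * 2 ^ k
            ≤ (2 * k) ^ (2 * k) * 2 ^ (2 * k) :=
              Nat.mul_le_mul (Nat.factorial_le_pow _)
                (Nat.pow_le_pow_right (by norm_num) (by omega))
          _ = (4 * k) ^ (2 * k) := by rw [← Nat.mul_pow]; congr 1; ring
          _ ≤ (2 * k ^ 2 + 8 * k) ^ (2 * k) :=
              Nat.pow_le_pow_left (by nlinarith) _
      calc ((2 * k).factorial : ℝ) * 2 ^ k = (((2 * k).factorial * 2 ^ k : ℕ) : ℝ) := by
            push_cast; ring
        _ ≤ (((2 * k ^ 2 + 8 * k) ^ (2 * k) : ℕ) : ℝ) := Nat.cast_le.mpr hnat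
        _ = (2 * (k : ℝ) ^ 2 + 8 * k) ^ (2 * k) := by push_cast; ring
    calc |subdet A LR LC| = |AL.det| := habsL.symm
      _ = |H.det| * |B.det| := hALdet
      _ ≤ (((2 * k).factorial : ℝ) * (2 ^ k * α⁻¹ ^ (2 * k))) * |B.det| :=
          mul_le_mul_of_nonneg_right hdetH (abs_nonneg _)
      _ ≤ ((2 * (k : ℝ) ^ 2 + 8 * k) / α) ^ (2 * k) * |B.det| := by
          refine mul_le_mul_of_nonneg_right ?_ (abs_nonneg _)
          have hrw : ((2 * (k : ℝ) ^ 2 + 8 * k) / α) ^ (2 * k)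
              = (2 * (k : ℝ) ^ 2 + 8 * k) ^ (2 * k) * α⁻¹ ^ (2 * k) := by
            rw [div_pow, div_eq_mul_inv, inv_pow]
          rw [hrw]
          calc ((2 * k).factorial : ℝ) * (2 ^ k * α⁻¹ ^ (2 * k))
              = (((2 * k).factorial : ℝ) * 2 ^ k) * α⁻¹ ^ (2 * k) := by ring
            _ ≤ (2 * (k : ℝ) ^ 2 + 8 * k) ^ (2 * k) * α⁻¹ ^ (2 * k) :=
                mul_le_mul_of_nonneg_right hnum (by positivity)
      _ = ((2 * (k : ℝ) ^ 2 + 8 * k) / α) ^ (2 * k) * |subdet A SR SC| := by rw [habsB]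
  refine ⟨main, ?_⟩
  have hb0 : 0 ≤ ((2 * (k : ℝ) ^ 2 + 8 * k) / α) ^ (2 * k) * |subdet A SR SC| := by positivity
  refine Real.sSup_le ?_ hb0
  rintro x ⟨R, C, hR, hC, rfl⟩
  exact main R C hR hC
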